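/- arXiv:1304.4362 — 3 statements merged into one kernel-verified Lean document; each statement's English description precedes it below -/
import Mathlib

section
/- For every integer I ≥ 1, (-1)^I ∑_{k=0}^I (-1)^k C(I,k) k^(I+2) = (I(I+1)(I+2)(3I+1)/24) · I!. -/
open Finset Function

private lemma cast_choose_eq (n k : ℕ) (h : k ≤ n) :
    (n.choose k : ℝ) * (k.factorial : ℝ) * ((n - k).factorial : ℝ) = (n.factorial : ℝ) := by
  exact_mod_cast congrArg (Nat.cast (R := ℝ)) (Nat.choose_mul_factorial_mul_factorial h)

private lemma fd_pow (m : ℕ) :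
    fwdDiff 1 (fun x : ℕ ↦ (x : ℝ) ^ m) =
      fun x : ℕ ↦ ∑ t ∈ Finset.range m, (m.choose t : ℝ) * (x : ℝ) ^ t := by
  ext x
  have h1 : (((x + 1 : ℕ)) : ℝ) = (x : ℝ) + 1 := by push_cast; ring
  have h2 : ((x : ℝ) + 1) ^ m = ∑ t ∈ Finset.range (m + 1), (m.choose t : ℝ) * (x : ℝ) ^ t := by
    rw [add_pow]
    refine Finset.sum_congr rfl fun t _ ↦ by ring
  simp only [fwdDiff, h1, h2, Finset.sum_range_succ, Nat.choose_self]
  ring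

private lemma fd_as_sum_smul (m : ℕ) :
    (fun x : ℕ ↦ ∑ t ∈ Finset.range m, (m.choose t : ℝ) * (x : ℝ) ^ t) =
      ∑ t ∈ Finset.range m, (m.choose t : ℝ) • (fun x : ℕ ↦ (x : ℝ) ^ t) := by
  ext x; simp

private lemma fd_iter_lt : ∀ n : ℕ, ∀ m : ℕ, m < n →
    (fwdDiff 1)^[n] (fun x : ℕ ↦ (x : ℝ) ^ m) = 0 := by
  intro n
  induction n with
  | zero => intro m hm; omega
  | succ n IH =>
    intro m hm
    rw [Function.iterate_succ_apply, fd_pow, fd_as_sum_smul, fwdDiff_iter_finset_sum]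
    refine Finset.sum_eq_zero fun t ht ↦ ?_
    rw [fwdDiff_iter_const_smul, IH t (by simp at ht; omega), smul_zero]

private lemma fd_iter_self : ∀ n : ℕ,
    (fwdDiff 1)^[n] (fun x : ℕ ↦ (x : ℝ) ^ n) = fun _ ↦ (n.factorial : ℝ) := by
  intro n
  induction n with
  | zero => ext x; simp
  | succ n IH =>
    rw [Function.iterate_succ_apply, fd_pow, fd_as_sum_smul, fwdDiff_iter_finset_sum,
      Finset.sum_range_succ]
    ext x
    simp only [Pi.add_apply, fwdDiff_iter_const_smul, IH, Pi.smul_apply, smul_eq_mul]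
    rw [Finset.sum_eq_zero fun t ht ↦ by
      rw [fd_iter_lt n t (Finset.mem_range.mp ht), smul_zero]]
    simp only [Pi.zero_apply, zero_add, Nat.choose_succ_self_right, Nat.factorial_succ]
    push_cast; ring

private lemma fd_iter_one : ∀ n : ℕ,
    (fwdDiff 1)^[n] (fun x : ℕ ↦ (x : ℝ) ^ (n + 1)) =
      fun x : ℕ ↦ (n.factorial : ℝ) * ((n + 1) * x + n * (n + 1) / 2) := by
  intro n
  induction n with
  | zero => ext x; simp
  | succ n IH =>
    rw [Function.iterate_succ_apply, fd_pow, fd_as_sum_smul, fwdDiff_iter_finset_sum,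
      Finset.sum_range_succ, Finset.sum_range_succ]
    ext x
    simp only [Pi.add_apply, fwdDiff_iter_const_smul, IH, fd_iter_self, Pi.smul_apply,
      smul_eq_mul]
    rw [Finset.sum_eq_zero fun t ht ↦ by
      rw [fd_iter_lt n t (Finset.mem_range.mp ht), smul_zero]]
    have hne : (n.factorial : ℝ) ≠ 0 := by positivity
    have hc1 : ((n + 2).choose (n + 1) : ℝ) = (n : ℝ) + 2 := by
      rw [Nat.choose_succ_self_right]; push_cast; ring
    have hc2 : ((n + 2).choose n : ℝ) * 2 = ((n : ℝ) + 2) * ((n : ℝ) + 1) := by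
      have hsy : (n + 2).choose n = (n + 2).choose 2 := by
        have h := Nat.choose_symm (show n ≤ n + 2 by omega)
        rw [show n + 2 - n = 2 by omega] at h; exact h.symm
      have h := cast_choose_eq (n + 2) 2 (by omega)
      rw [show n + 2 - 2 = n by omega] at h
      have hfa : ((n + 2).factorial : ℝ) = (((n : ℝ) + 2) * ((n : ℝ) + 1)) * n.factorial := by
        rw [show n + 2 = n + 1 + 1 from rfl, Nat.factorial_succ, Nat.factorial_succ]
        push_cast; ring
      rw [hfa] at h
      refine mul_right_cancel₀ hne ?_
      rw [hsy, ← h]; norm_num [Nat.factorial]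
    have hc2' : ((n + 2).choose n : ℝ) = ((n : ℝ) + 2) * ((n : ℝ) + 1) / 2 := by linarith
    rw [show n + 1 + 1 = n + 2 by omega] at *
    rw [hc1, hc2', Nat.factorial_succ]
    push_cast
    simp only [Pi.zero_apply, zero_add]
    ring

private lemma fd_iter_two : ∀ n : ℕ,
    (fwdDiff 1)^[n] (fun x : ℕ ↦ (x : ℝ) ^ (n + 2)) =
      fun x : ℕ ↦ (n.factorial : ℝ) *
        ((n + 1) * (n + 2) / 2 * x ^ 2 + n * (n + 1) * (n + 2) / 2 * x
          + n * (n + 1) * (n + 2) * (3 * n + 1) / 24) := by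
  intro n
  induction n with
  | zero => ext x; norm_num
  | succ n IH =>
    rw [Function.iterate_succ_apply, fd_pow, fd_as_sum_smul, fwdDiff_iter_finset_sum,
      Finset.sum_range_succ, Finset.sum_range_succ, Finset.sum_range_succ]
    ext x
    simp only [Pi.add_apply, fwdDiff_iter_const_smul, IH, fd_iter_self, fd_iter_one,
      Pi.smul_apply, smul_eq_mul]
    rw [Finset.sum_eq_zero fun t ht ↦ by
      rw [fd_iter_lt n t (Finset.mem_range.mp ht), smul_zero]]
    have hne : (n.factorial : ℝ) ≠ 0 := by positivity
    have hfa : ((n + 3).factorial : ℝ)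
        = (((n : ℝ) + 3) * ((n : ℝ) + 2) * ((n : ℝ) + 1)) * n.factorial := by
      rw [show n + 3 = n + 2 + 1 from rfl, Nat.factorial_succ,
        show n + 2 = n + 1 + 1 from rfl, Nat.factorial_succ, Nat.factorial_succ]
      push_cast; ring
    have hc1 : ((n + 3).choose (n + 2) : ℝ) = (n : ℝ) + 3 := by
      rw [Nat.choose_succ_self_right]; push_cast; ring
    have hc2 : ((n + 3).choose (n + 1) : ℝ) * 2 = ((n : ℝ) + 3) * ((n : ℝ) + 2) := by
      have hsy : (n + 3).choose (n + 1) = (n + 3).choose 2 := by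
        have h := Nat.choose_symm (show n + 1 ≤ n + 3 by omega)
        rw [show n + 3 - (n + 1) = 2 by omega] at h; exact h.symm
      have h := cast_choose_eq (n + 3) 2 (by omega)
      rw [show n + 3 - 2 = n + 1 by omega] at h
      have hfb : ((n + 1).factorial : ℝ) = ((n : ℝ) + 1) * n.factorial := by
        rw [Nat.factorial_succ]; push_cast; ring
      rw [hfb, hfa] at h
      have hne1 : ((n : ℝ) + 1) * (n.factorial : ℝ) ≠ 0 := by positivity
      refine mul_right_cancel₀ hne1 ?_
      rw [hsy]
      have h2 : ((2 : ℕ).factorial : ℝ) = 2 := by norm_num [Nat.factorial]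
      rw [h2] at h
      nlinarith [h]
    have hc3 : ((n + 3).choose n : ℝ) * 6
        = ((n : ℝ) + 3) * ((n : ℝ) + 2) * ((n : ℝ) + 1) := by
      have hsy : (n + 3).choose n = (n + 3).choose 3 := by
        have h := Nat.choose_symm (show n ≤ n + 3 by omega)
        rw [show n + 3 - n = 3 by omega] at h; exact h.symm
      have h := cast_choose_eq (n + 3) 3 (by omega)
      rw [show n + 3 - 3 = n by omega] at h
      have h3 : ((3 : ℕ).factorial : ℝ) = 6 := by norm_num [Nat.factorial]
      rw [h3, hfa] at h
      refine mul_right_cancel₀ hne ?_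
      rw [hsy]; nlinarith [h]
    have hc2' : ((n + 3).choose (n + 1) : ℝ) = ((n : ℝ) + 3) * ((n : ℝ) + 2) / 2 := by linarith
    have hc3' : ((n + 3).choose n : ℝ)
        = ((n : ℝ) + 3) * ((n : ℝ) + 2) * ((n : ℝ) + 1) / 6 := by linarith
    rw [show n + 1 + 2 = n + 3 by omega] at *
    rw [hc1, hc2', hc3', Nat.factorial_succ]
    push_cast
    simp only [Pi.zero_apply, zero_add]
    ring

theorem alternating_binomial_moment_succ_succ (I : ℕ) (hI : 1 ≤ I) :
    (-1 : ℝ) ^ I * ∑ k ∈ Finset.range (I + 1), (-1 : ℝ) ^ k * (I.choose k) * (k : ℝ) ^ (I + 2) =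
      ((I : ℝ) * (I + 1) * (I + 2) * (3 * I + 1) / 24) * (I.factorial : ℝ) := by
  have key := fwdDiff_iter_eq_sum_shift (1 : ℕ) (fun x : ℕ ↦ (x : ℝ) ^ (I + 2)) I 0
  rw [fd_iter_two I] at key
  simp only [Nat.cast_zero, zero_add, smul_eq_mul, mul_one, zsmul_eq_mul] at key
  have hL : (-1 : ℝ) ^ I *
      ∑ k ∈ Finset.range (I + 1), (-1 : ℝ) ^ k * (I.choose k) * (k : ℝ) ^ (I + 2) =
      ∑ k ∈ Finset.range (I + 1),
        (((-1 : ℤ) ^ (I - k) * (I.choose k) : ℤ) : ℝ) * (k : ℝ) ^ (I + 2) := by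
    rw [Finset.mul_sum]
    refine Finset.sum_congr rfl fun k hk ↦ ?_
    have hk' : k ≤ I := by simpa using Nat.lt_succ_iff.mp (Finset.mem_range.mp hk)
    have h1 : (-1 : ℝ) ^ (I - k) * (-1 : ℝ) ^ k = (-1 : ℝ) ^ I := by
      rw [← pow_add, Nat.sub_add_cancel hk']
    have h2 : (-1 : ℝ) ^ (I - k) = (-1 : ℝ) ^ I * (-1 : ℝ) ^ k := by
      rw [← h1, mul_assoc, ← pow_add, Even.neg_one_pow ⟨k, rfl⟩, mul_one]
    push_cast
    rw [h2]; ring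
  rw [hL, ← key]
  push_cast
  ring
end

section
/- Define β_N(I) = C(N,I) ∑_{m=0}^I C(I,m) (-1)^m log(N-I+m) for integers 1 ≤ I ≤ N-1 (and allowing I up to N-1 in N). Then the recursion β_N(I+1) = (N/(I+1)) β_{N-1}(I) - ((N-I)/(I+1)) β_N(I) holds for all valid I, N. -/
noncomputable def betaCoeff (N I : ℕ) : ℝ :=
  (N.choose I : ℝ) *
    ∑ m ∈ Finset.range (I + 1), (I.choose m : ℝ) * (-1 : ℝ) ^ m * Real.log ((N : ℝ) - I + m)

theorem betaCoeff_recursion (N I : ℕ) (hI : 1 ≤ I) (hIN : I + 1 ≤ N - 1) :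
    betaCoeff N (I + 1) =
      ((N : ℝ) / (I + 1)) * betaCoeff (N - 1) I - (((N : ℝ) - I) / (I + 1)) * betaCoeff N I := by
  have hN : I + 2 ≤ N := by omega
  have hcast : ((N - 1 : ℕ) : ℝ) = (N : ℝ) - 1 := by
    have : (1:ℕ) ≤ N := by omega
    push_cast [Nat.cast_sub this]; ring
  set f : ℕ → ℝ := fun m => Real.log ((N : ℝ) - (↑(I+1) : ℝ) + m) with hf
  set A : ℝ := ∑ m ∈ Finset.range (I + 1),
      (I.choose m : ℝ) * (-1:ℝ)^m * Real.log (((N-1:ℕ):ℝ) - I + m) with hA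
  set B : ℝ := ∑ m ∈ Finset.range (I + 1),
      (I.choose m : ℝ) * (-1:ℝ)^m * Real.log ((N:ℝ) - I + m) with hB
  have hfg : ∀ m : ℕ, Real.log (((N-1:ℕ):ℝ) - I + m) = f m := by
    intro m; simp only [hf, hcast]; push_cast; ring_nf
  have hsum : ∑ m ∈ Finset.range (I + 2), ((I+1).choose m : ℝ) * (-1:ℝ)^m * f m
      = A - B := by
    rw [Finset.sum_range_succ' _ (I+1)]
    have step : ∀ k ∈ Finset.range (I+1),
        (((I+1).choose (k+1) : ℝ)) * (-1:ℝ)^(k+1) * f (k+1)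
          = ((I.choose (k+1) : ℝ) * (-1:ℝ)^(k+1) * f (k+1))
            - ((I.choose k : ℝ) * (-1:ℝ)^k * f (k+1)) := by
      intro k _
      rw [Nat.choose_succ_succ]
      push_cast
      ring
    rw [Finset.sum_congr rfl step, Finset.sum_sub_distrib]
    have hBeq : ∑ k ∈ Finset.range (I+1), (I.choose k : ℝ) * (-1:ℝ)^k * f (k+1) = B := by
      apply Finset.sum_congr rfl
      intro k _
      simp only [hf]
      congr 1
      push_cast
      ring_nf
    have hAeq : ∑ k ∈ Finset.range (I+1), (I.choose (k+1) : ℝ) * (-1:ℝ)^(k+1) * f (k+1)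
        = A - f 0 := by
      rw [Finset.sum_range_succ]
      simp only [Nat.choose_succ_self, Nat.cast_zero, zero_mul, add_zero]
      have : A = (∑ k ∈ Finset.range I, (I.choose (k+1) : ℝ) * (-1:ℝ)^(k+1) * f (k+1))
          + (I.choose 0 : ℝ) * (-1:ℝ)^0 * f 0 := by
        rw [hA, Finset.sum_range_succ' _ I]
        congr 1
        · apply Finset.sum_congr rfl; intro k _; rw [hfg]
        · rw [hfg]
      rw [this]; simp
    rw [hBeq, hAeq]
    simp
    ring
  have hI' : (I:ℝ) + 1 ≠ 0 := by positivity
  have h1 : ((I:ℝ) + 1) * (N.choose (I+1) : ℝ) = (N:ℝ) * ((N-1).choose I : ℝ) := by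
    have := Nat.add_one_mul_choose_eq (N-1) I
    have hs : N - 1 + 1 = N := by omega
    rw [hs] at this
    have hnat : (I+1) * N.choose (I+1) = N * (N-1).choose I := by
      rw [this, mul_comm]
    exact_mod_cast hnat
  have h2 : ((I:ℝ) + 1) * (N.choose (I+1) : ℝ) = ((N:ℝ) - I) * (N.choose I : ℝ) := by
    have := Nat.choose_succ_right_eq N I
    have hsub : ((N - I : ℕ) : ℝ) = (N:ℝ) - I := by
      have : I ≤ N := by omega
      push_cast [Nat.cast_sub this]; ring
    have hcastthis : (N.choose (I+1) : ℝ) * ((I:ℝ)+1) = (N.choose I : ℝ) * ((N - I : ℕ) : ℝ) := by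
      exact_mod_cast congrArg (Nat.cast (R := ℝ)) this
    rw [hsub] at hcastthis
    linarith [hcastthis]
  simp only [betaCoeff]
  have hLHS : ∑ m ∈ Finset.range (I + 1 + 1),
      ((I+1).choose m : ℝ) * (-1:ℝ)^m * Real.log ((N:ℝ) - ↑(I+1) + m) = A - B := by
    rw [← hsum]
  rw [hLHS]
  rw [← hA, ← hB]
  field_simp
  linear_combination A * h1 - B * h2
end

section
/- For fixed I ≥ 1, as N → ∞, N·C(N,I)·∑_{m=0}^I C(I,m)(-1)^m log(N-I+m) · ((1 - I/N) log(1 - I/N)) → 1. Equivalently, N C(N,I) S_I → 1/((1-x)log(1-x)) with x = I/N in the limit sense. -/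
open Filter

lemma diff_sum (n : ℕ) (f : ℕ → ℝ) :
    ∑ m ∈ Finset.range (n + 2), ((n+1).choose m : ℝ) * (-1)^m * f m
      = ∑ m ∈ Finset.range (n + 1), (n.choose m : ℝ) * (-1)^m * (f m - f (m+1)) := by
  have h1 : ∑ m ∈ Finset.range (n + 2), ((n+1).choose m : ℝ) * (-1)^m * f m
      = (∑ m ∈ Finset.range (n + 1), ((n+1).choose (m+1) : ℝ) * (-1)^(m+1) * f (m+1)) + f 0 := by
    rw [Finset.sum_range_succ']; simp
  have h2 : ∀ m, ((n+1).choose (m+1) : ℝ) = (n.choose m : ℝ) + (n.choose (m+1) : ℝ) := by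
    intro m; rw [Nat.choose_succ_succ]; push_cast; ring
  have h3 : (∑ m ∈ Finset.range (n + 1), ((n+1).choose (m+1) : ℝ) * (-1)^(m+1) * f (m+1))
      = -(∑ m ∈ Finset.range (n + 1), (n.choose m : ℝ) * (-1)^m * f (m+1))
        - ∑ m ∈ Finset.range (n + 1), (n.choose (m+1) : ℝ) * (-1)^m * f (m+1) := by
    rw [← Finset.sum_neg_distrib, ← Finset.sum_sub_distrib]
    apply Finset.sum_congr rfl
    intro m _
    rw [h2 m]; ring
  have e1 : ∑ m ∈ Finset.range (n + 1), (n.choose m : ℝ) * (-1)^m * f m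
      = (∑ m ∈ Finset.range n, (n.choose (m+1) : ℝ) * (-1)^(m+1) * f (m+1)) + f 0 := by
    rw [Finset.sum_range_succ']; simp
  have e2 : ∑ m ∈ Finset.range (n + 1), (n.choose (m+1) : ℝ) * (-1)^m * f (m+1)
      = ∑ m ∈ Finset.range n, (n.choose (m+1) : ℝ) * (-1)^m * f (m+1) := by
    rw [Finset.sum_range_succ]; simp
  have e3 : ∑ m ∈ Finset.range n, (n.choose (m+1) : ℝ) * (-1)^(m+1) * f (m+1)
      = -∑ m ∈ Finset.range n, (n.choose (m+1) : ℝ) * (-1)^m * f (m+1) := by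
    rw [← Finset.sum_neg_distrib]; apply Finset.sum_congr rfl; intro m _; ring
  have h4 : ∑ m ∈ Finset.range (n + 1), (n.choose (m+1) : ℝ) * (-1)^m * f (m+1)
      = f 0 - ∑ m ∈ Finset.range (n + 1), (n.choose m : ℝ) * (-1)^m * f m := by
    rw [e2]; rw [e3] at e1; linarith
  have h5 : ∑ m ∈ Finset.range (n+1), (n.choose m : ℝ) * (-1)^m * (f m - f (m+1))
      = ∑ m ∈ Finset.range (n+1), (n.choose m : ℝ) * (-1)^m * f m
        - ∑ m ∈ Finset.range (n+1), (n.choose m : ℝ) * (-1)^m * f (m+1) := by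
    rw [← Finset.sum_sub_distrib]; apply Finset.sum_congr rfl; intro m _; ring
  rw [h1, h3, h4, h5]; ring

lemma partial_frac (n : ℕ) : ∀ x : ℝ, 0 < x →
    ∑ m ∈ Finset.range (n + 1), (n.choose m : ℝ) * (-1)^m * (x + m)⁻¹
      = (n.factorial : ℝ) / ∏ j ∈ Finset.range (n + 1), (x + j) := by
  induction n with
  | zero => intro x hx; simp
  | succ n ih =>
    intro x hx
    rw [diff_sum n (fun m => (x + m)⁻¹)]
    have split : ∑ m ∈ Finset.range (n + 1), (n.choose m : ℝ) * (-1)^m *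
        ((fun m : ℕ => (x + m)⁻¹) m - (fun m : ℕ => (x + m)⁻¹) (m+1))
        = (∑ m ∈ Finset.range (n + 1), (n.choose m : ℝ) * (-1)^m * (x + m)⁻¹)
          - ∑ m ∈ Finset.range (n + 1), (n.choose m : ℝ) * (-1)^m * ((x+1) + m)⁻¹ := by
      rw [← Finset.sum_sub_distrib]; apply Finset.sum_congr rfl; intro m _
      simp only []; push_cast; ring_nf
    rw [split, ih x hx, ih (x+1) (by linarith)]
    set P := ∏ j ∈ Finset.range (n + 1), (x + (j:ℝ)) with hP
    set Q := ∏ j ∈ Finset.range (n + 1), ((x+1) + (j:ℝ)) with hQ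
    have hPpos : 0 < P := Finset.prod_pos (fun j _ => by positivity)
    have hQpos : 0 < Q := Finset.prod_pos (fun j _ => by positivity)
    have p1 : ∏ j ∈ Finset.range (n + 2), (x + (j:ℝ)) = P * (x + (n:ℝ) + 1) := by
      rw [Finset.prod_range_succ]; push_cast; ring
    have p2 : ∏ j ∈ Finset.range (n + 2), (x + (j:ℝ)) = Q * x := by
      rw [Finset.prod_range_succ']
      congr 1
      · apply Finset.prod_congr rfl; intro j _; push_cast; ring
      · simp
    have key : Q * x = P * (x + (n:ℝ) + 1) := by rw [← p2, p1]
    rw [Nat.factorial_succ]; push_cast; rw [p1]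
    have hx1 : (0:ℝ) < x + (n:ℝ) + 1 := by positivity
    rw [div_sub_div _ _ (ne_of_gt hPpos) (ne_of_gt hQpos),
      div_eq_div_iff (by positivity) (by positivity)]
    linear_combination ((n.factorial : ℝ) * P) * key

lemma key_mvt (n : ℕ) (y : ℝ) (hy : 0 < y) :
    ∃ c ∈ Set.Ioo (0:ℝ) 1,
      ∑ m ∈ Finset.range (n + 2), ((n+1).choose m : ℝ) * (-1)^m * Real.log (y + m)
        = -((n.factorial : ℝ) / ∏ j ∈ Finset.range (n + 1), (y + c + j)) := by
  set h : ℝ → ℝ := fun t => ∑ m ∈ Finset.range (n+1),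
    (n.choose m : ℝ) * (-1)^m * Real.log (y + t + m) with hh
  set h' : ℝ → ℝ := fun t => ∑ m ∈ Finset.range (n+1),
    (n.choose m : ℝ) * (-1)^m * (y + t + m)⁻¹ with hh'
  have hderiv : ∀ t : ℝ, 0 ≤ t → HasDerivAt h (h' t) t := by
    intro t ht
    apply HasDerivAt.fun_sum
    intro m _
    have hne : y + t + (m:ℝ) ≠ 0 := by positivity
    have base : HasDerivAt (fun t : ℝ => y + t + (m:ℝ)) 1 t := by
      simpa using ((hasDerivAt_id t).const_add y).add_const (m:ℝ)
    have hlog := base.log hne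
    have := hlog.const_mul ((n.choose m : ℝ) * (-1)^m)
    simpa [one_div] using this
  have hcont : ContinuousOn h (Set.Icc 0 1) := fun t ht =>
    ((hderiv t ht.1).continuousAt).continuousWithinAt
  obtain ⟨c, hc, hceq⟩ := exists_hasDerivAt_eq_slope h h' one_pos hcont
    (fun t ht => hderiv t (le_of_lt ht.1))
  refine ⟨c, hc, ?_⟩
  have hpf : h' c = (n.factorial : ℝ) / ∏ j ∈ Finset.range (n + 1), (y + c + j) := by
    have := partial_frac n (y + c) (by linarith [hc.1])
    simpa using this
  have hT : ∑ m ∈ Finset.range (n + 2), ((n+1).choose m : ℝ) * (-1)^m * Real.log (y + m)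
      = h 0 - h 1 := by
    rw [diff_sum n (fun m => Real.log (y + m))]
    rw [hh]
    simp only []
    rw [← Finset.sum_sub_distrib]
    apply Finset.sum_congr rfl
    intro m _
    push_cast
    ring_nf
  rw [hT]
  rw [← hpf]
  have : (1:ℝ) - 0 = 1 := by norm_num
  rw [this, div_one] at hceq
  linarith [hceq]

lemma aux_tendsto_div (a : ℝ) :
    Tendsto (fun N : ℕ => (N : ℝ) / ((N : ℝ) + a)) atTop (nhds 1) := by
  have h0 : Tendsto (fun N : ℕ => 1 + a / (N : ℝ)) atTop (nhds 1) := by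
    simpa using tendsto_const_nhds.add (tendsto_const_div_atTop_nhds_zero_nat a)
  have h1 : Tendsto (fun N : ℕ => ((N : ℝ) + a) / (N : ℝ)) atTop (nhds 1) := by
    apply h0.congr'
    filter_upwards [eventually_gt_atTop 0] with N hN
    have : (N : ℝ) ≠ 0 := Nat.cast_ne_zero.2 hN.ne'
    field_simp
  have := h1.inv₀ one_ne_zero
  simpa only [inv_div, inv_one] using this

lemma hB (n : ℕ) :
    Tendsto (fun N : ℕ => (N : ℝ)^(n+1) *
      ∑ m ∈ Finset.range (n + 2), ((n+1).choose m : ℝ) * (-1)^m *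
        Real.log ((N : ℝ) - ((n+1 : ℕ) : ℝ) + m)) atTop
      (nhds (-(n.factorial : ℝ))) := by
  have hlow : Tendsto (fun N : ℕ => -((n.factorial : ℝ) *
      ∏ j ∈ Finset.range (n+1), ((N:ℝ) / ((N:ℝ) + ((j:ℝ) - ((n:ℝ)+1)))))) atTop
      (nhds (-(n.factorial : ℝ))) := by
    have hp : Tendsto (fun N : ℕ => ∏ j ∈ Finset.range (n+1),
        ((N:ℝ) / ((N:ℝ) + ((j:ℝ) - ((n:ℝ)+1))))) atTop
        (nhds (∏ _j ∈ Finset.range (n+1), (1:ℝ))) :=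
      tendsto_finset_prod _ (fun j _ => aux_tendsto_div _)
    have := (tendsto_const_nhds : Tendsto (fun _ : ℕ => (n.factorial:ℝ)) atTop _).mul hp
    simpa using this.neg
  have hup : Tendsto (fun N : ℕ => -((n.factorial : ℝ) *
      ∏ j ∈ Finset.range (n+1), ((N:ℝ) / ((N:ℝ) + ((j:ℝ) - (n:ℝ)))))) atTop
      (nhds (-(n.factorial : ℝ))) := by
    have hp : Tendsto (fun N : ℕ => ∏ j ∈ Finset.range (n+1),
        ((N:ℝ) / ((N:ℝ) + ((j:ℝ) - (n:ℝ))))) atTop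
        (nhds (∏ _j ∈ Finset.range (n+1), (1:ℝ))) :=
      tendsto_finset_prod _ (fun j _ => aux_tendsto_div _)
    have := (tendsto_const_nhds : Tendsto (fun _ : ℕ => (n.factorial:ℝ)) atTop _).mul hp
    simpa using this.neg
  apply tendsto_of_tendsto_of_tendsto_of_le_of_le' hlow hup
  · -- lower bound eventually
    filter_upwards [eventually_ge_atTop (n+2)] with N hN
    have hy : (0:ℝ) < (N:ℝ) - ((n+1 : ℕ) : ℝ) := by
      have : ((n+1:ℕ):ℝ) < (N:ℝ) := by
        exact_mod_cast Nat.lt_of_lt_of_le (Nat.lt_succ_self _) hN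
      linarith
    obtain ⟨c, hc, hTc⟩ := key_mvt n ((N:ℝ) - ((n+1 : ℕ) : ℝ)) hy
    set y : ℝ := (N:ℝ) - ((n+1 : ℕ) : ℝ) with hy'
    have hNpos : (0:ℝ) < (N:ℝ) := Nat.cast_pos.2 (by omega)
    set P0 := ∏ j ∈ Finset.range (n+1), (y + (j:ℝ)) with hP0
    set Pc := ∏ j ∈ Finset.range (n+1), (y + c + (j:ℝ)) with hPc
    have hP0pos : (0:ℝ) < P0 := Finset.prod_pos (fun j _ => by positivity)
    have hPcpos : (0:ℝ) < Pc := Finset.prod_pos (fun j _ => by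
      have := hc.1; positivity)
    have hle : P0 ≤ Pc := by
      apply Finset.prod_le_prod (fun j _ => by positivity)
      intro j _; have := hc.1; linarith
    have hprod : ∏ j ∈ Finset.range (n+1), ((N:ℝ) / ((N:ℝ) + ((j:ℝ) - ((n:ℝ)+1))))
        = (N:ℝ)^(n+1) / P0 := by
      rw [Finset.prod_div_distrib, Finset.prod_const, Finset.card_range]
      congr 1
      apply Finset.prod_congr rfl; intro j _; rw [hy']; push_cast; ring
    rw [hTc, hprod]
    have h3 : (↑n.factorial * (N:ℝ)^(n+1))/Pc ≤ (↑n.factorial * (N:ℝ)^(n+1))/P0 := by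
      gcongr
    have e1 : -((n.factorial:ℝ) * ((N:ℝ)^(n+1) / P0))
        = -((↑n.factorial * (N:ℝ)^(n+1))/P0) := by ring
    have e2 : (N:ℝ)^(n+1) * -((n.factorial:ℝ) / Pc)
        = -((↑n.factorial * (N:ℝ)^(n+1))/Pc) := by ring
    rw [e1, e2]
    exact neg_le_neg h3
  · -- upper bound eventually
    filter_upwards [eventually_ge_atTop (n+2)] with N hN
    have hy : (0:ℝ) < (N:ℝ) - ((n+1 : ℕ) : ℝ) := by
      have : ((n+1:ℕ):ℝ) < (N:ℝ) := by
        exact_mod_cast Nat.lt_of_lt_of_le (Nat.lt_succ_self _) hN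
      linarith
    obtain ⟨c, hc, hTc⟩ := key_mvt n ((N:ℝ) - ((n+1 : ℕ) : ℝ)) hy
    set y : ℝ := (N:ℝ) - ((n+1 : ℕ) : ℝ) with hy'
    have hNpos : (0:ℝ) < (N:ℝ) := Nat.cast_pos.2 (by omega)
    set P1 := ∏ j ∈ Finset.range (n+1), (y + 1 + (j:ℝ)) with hP1
    set Pc := ∏ j ∈ Finset.range (n+1), (y + c + (j:ℝ)) with hPc
    have hP1pos : (0:ℝ) < P1 := Finset.prod_pos (fun j _ => by positivity)
    have hPcpos : (0:ℝ) < Pc := Finset.prod_pos (fun j _ => by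
      have := hc.1; positivity)
    have hle : Pc ≤ P1 := by
      apply Finset.prod_le_prod (fun j _ => by have := hc.1; positivity)
      intro j _; have := hc.2; linarith
    have hprod : ∏ j ∈ Finset.range (n+1), ((N:ℝ) / ((N:ℝ) + ((j:ℝ) - (n:ℝ))))
        = (N:ℝ)^(n+1) / P1 := by
      rw [Finset.prod_div_distrib, Finset.prod_const, Finset.card_range]
      congr 1
      apply Finset.prod_congr rfl; intro j _; rw [hy']; push_cast; ring
    rw [hTc, hprod]
    have h3 : (↑n.factorial * (N:ℝ)^(n+1))/P1 ≤ (↑n.factorial * (N:ℝ)^(n+1))/Pc := by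
      gcongr
    have e1 : -((n.factorial:ℝ) * ((N:ℝ)^(n+1) / P1))
        = -((↑n.factorial * (N:ℝ)^(n+1))/P1) := by ring
    have e2 : (N:ℝ)^(n+1) * -((n.factorial:ℝ) / Pc)
        = -((↑n.factorial * (N:ℝ)^(n+1))/Pc) := by ring
    rw [e1, e2]
    exact neg_le_neg h3

lemma aux_one_sub (a : ℝ) :
    Tendsto (fun N : ℕ => 1 - a / (N : ℝ)) atTop (nhds 1) := by
  simpa using tendsto_const_nhds.sub (tendsto_const_div_atTop_nhds_zero_nat a)

lemma hA (k : ℕ) :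
    Tendsto (fun N : ℕ => (N.choose k : ℝ) / (N : ℝ)^k) atTop
      (nhds (1 / (k.factorial : ℝ))) := by
  have hp : Tendsto (fun N : ℕ => ∏ j ∈ Finset.range k, (1 - (j:ℝ)/(N:ℝ))) atTop
      (nhds (∏ _j ∈ Finset.range k, (1:ℝ))) :=
    tendsto_finset_prod _ (fun j _ => aux_one_sub _)
  have h0 : Tendsto (fun N : ℕ => (1 / (k.factorial : ℝ)) *
      ∏ j ∈ Finset.range k, (1 - (j:ℝ)/(N:ℝ))) atTop (nhds (1 / (k.factorial : ℝ))) := by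
    have := (tendsto_const_nhds : Tendsto (fun _ : ℕ => 1/(k.factorial:ℝ)) atTop _).mul hp
    simpa using this
  apply h0.congr'
  filter_upwards [eventually_ge_atTop (max k 1)] with N hN
  have hk : k ≤ N := le_trans (le_max_left _ _) hN
  have hN1 : 1 ≤ N := le_trans (le_max_right _ _) hN
  have hNne : (N:ℝ) ≠ 0 := Nat.cast_ne_zero.2 (by omega)
  have hdesc : (N.choose k : ℝ) * (k.factorial : ℝ) = ∏ j ∈ Finset.range k, ((N:ℝ) - (j:ℝ)) := by
    have h1 : N.descFactorial k = k.factorial * N.choose k :=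
      Nat.descFactorial_eq_factorial_mul_choose N k
    have h2 : N.descFactorial k = ∏ j ∈ Finset.range k, (N - j) :=
      Nat.descFactorial_eq_prod_range N k
    have h3 : ((N.descFactorial k : ℕ) : ℝ) = ∏ j ∈ Finset.range k, ((N:ℝ) - (j:ℝ)) := by
      rw [h2]; push_cast [Finset.prod_natCast]
      apply Finset.prod_congr rfl
      intro j hj
      have : j ≤ N := le_trans (le_of_lt (Finset.mem_range.1 hj)) hk
      push_cast [Nat.cast_sub this]
      ring
    rw [← h3, h1]; push_cast; ring
  have hprod : ∏ j ∈ Finset.range k, (1 - (j:ℝ)/(N:ℝ))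
      = (∏ j ∈ Finset.range k, ((N:ℝ) - (j:ℝ))) / (N:ℝ)^k := by
    rw [eq_div_iff (by positivity),
      show ((N:ℝ))^k = ∏ _j ∈ Finset.range k, (N:ℝ) by simp,
      ← Finset.prod_mul_distrib]
    apply Finset.prod_congr rfl
    intro j _
    field_simp
  rw [hprod, ← hdesc]
  have hfne : (k.factorial : ℝ) ≠ 0 := by positivity
  field_simp

lemma hC (k : ℕ) :
    Tendsto (fun N : ℕ => (N:ℝ) * ((1 - (k:ℝ)/(N:ℝ)) * Real.log (1 - (k:ℝ)/(N:ℝ))))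
      atTop (nhds (-(k:ℝ))) := by
  have h1 : Tendsto (fun N : ℕ => (N:ℝ) * Real.log (1 - (k:ℝ)/(N:ℝ))) atTop
      (nhds (-(k:ℝ))) := by
    have := (Real.tendsto_mul_log_one_add_div_atTop (-(k:ℝ))).comp
      (tendsto_natCast_atTop_atTop (R := ℝ))
    simpa [Function.comp_def, neg_div, ← sub_eq_add_neg] using this
  have h2 := (aux_one_sub (k:ℝ)).mul h1
  have h3 : Tendsto (fun N : ℕ => (1 - (k:ℝ)/(N:ℝ)) * ((N:ℝ) * Real.log (1 - (k:ℝ)/(N:ℝ))))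
      atTop (nhds (-(k:ℝ))) := by simpa using h2
  apply h3.congr
  intro N; ring

theorem betaCoeff_limit (I : ℕ) (hI : 1 ≤ I) :
    Tendsto (fun N : ℕ =>
      (N : ℝ) * (N.choose I : ℝ) *
        (∑ m ∈ Finset.range (I + 1), (I.choose m : ℝ) * (-1 : ℝ) ^ m *
          Real.log ((N : ℝ) - I + m)) *
        ((1 - (I : ℝ) / N) * Real.log (1 - (I : ℝ) / N)))
      atTop (nhds 1) := by
  obtain ⟨n, rfl⟩ : ∃ n, I = n + 1 := ⟨I - 1, (Nat.succ_pred_eq_of_pos hI).symm⟩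
  have hprod := ((hA (n+1)).mul (hB n)).mul (hC (n+1))
  have hval : 1 / (((n+1).factorial : ℕ) : ℝ) * (-(n.factorial:ℝ)) * (-(((n+1):ℕ):ℝ)) = 1 := by
    rw [Nat.factorial_succ]
    have : (n.factorial : ℝ) ≠ 0 := by positivity
    push_cast
    field_simp
  rw [hval] at hprod
  apply hprod.congr'
  filter_upwards [eventually_ge_atTop 1] with N hN
  have hNne : (N:ℝ) ≠ 0 := Nat.cast_ne_zero.2 (by omega)
  have hpow : (N:ℝ)^(n+1) ≠ 0 := pow_ne_zero _ hNne
  show (N.choose (n+1) : ℝ) / (N : ℝ)^(n+1) * ((N : ℝ)^(n+1) * _) * ((N:ℝ) * _) = _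
  field_simp
end
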